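/- Let (X_(1),...,X_(N_e)) be a SRSWOR of size N_e = πN from {x_1,...,x_N} with N ≥ 2, and define Var(Y | X_s) = π·X̄_e^(2) − (π·X̄_e)^2 as above. Then E(Var(Y | X_s)) = π·μ_x^(2) − (π·μ_x)^2 − π(1−π)·σ_x^2/(N−1), where μ_x^(2) = (1/N)Σx_i^2, μ_x = (1/N)Σx_i, and σ_x^2 = (1/N)Σ(x_i − μ_x)^2. -/

import Mathlib

open Finset

lemma count_superset {α : Type*} [DecidableEq α] [Fintype α] (n : ℕ) (t : Finset α)
    (ht : t.card ≤ n) :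
    ((Finset.powersetCard n (Finset.univ : Finset α)).filter (fun s => t ⊆ s)).card
      = (Fintype.card α - t.card).choose (n - t.card) := by
  have h1 : ((Finset.powersetCard n (Finset.univ : Finset α)).filter (fun s => t ⊆ s)).card
      = (Finset.powersetCard (n - t.card) ((Finset.univ : Finset α) \ t)).card := by
    apply Finset.card_bij' (fun s _ => s \ t) (fun u _ => u ∪ t)
    · intro s hs
      simp only [Finset.mem_filter, Finset.mem_powersetCard] at hs
      obtain ⟨⟨_, hcard⟩, hts⟩ := hs
      rw [Finset.mem_powersetCard]
      refine ⟨Finset.sdiff_subset_sdiff (Finset.subset_univ s) le_rfl, ?_⟩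
      rw [Finset.card_sdiff_of_subset hts, hcard]
    · intro u hu
      rw [Finset.mem_powersetCard] at hu
      obtain ⟨hsub, hcard⟩ := hu
      have hdisj : Disjoint u t := by
        refine Finset.disjoint_left.mpr fun a ha hat => ?_
        have := hsub ha
        simp [Finset.mem_sdiff] at this
        exact this hat
      simp only [Finset.mem_filter, Finset.mem_powersetCard]
      refine ⟨⟨Finset.subset_univ _, ?_⟩, Finset.subset_union_right⟩
      rw [Finset.card_union_of_disjoint hdisj, hcard]
      omega
    · intro s hs
      simp only [Finset.mem_filter, Finset.mem_powersetCard] at hs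
      exact Finset.sdiff_union_of_subset hs.2
    · intro u hu
      rw [Finset.mem_powersetCard] at hu
      have hdisj : Disjoint u t := by
        refine Finset.disjoint_left.mpr fun a ha hat => ?_
        have := hu.1 ha
        simp [Finset.mem_sdiff] at this
        exact this hat
      exact Finset.union_sdiff_cancel_right hdisj
  rw [h1, Finset.card_powersetCard, Finset.card_sdiff_of_subset (Finset.subset_univ t),
    Finset.card_univ]

/-- Averaging the conditional variance
`Var(Y|X_s) = π·X̄_e^(2) − (π·X̄_e)²` over all SRSWOR samples `s` of size
`N_e = π·N` (i.e. all size-`N_e` subsets of the population, equally likely) gives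
`E(Var(Y|X_s)) = π μ_x^(2) − (π μ_x)² − π(1−π) σ_x²/(N−1)`. -/
theorem stmt_2 (N N_e : ℕ) (hN : 2 ≤ N) (hNe : 1 ≤ N_e) (hle : N_e ≤ N)
    (x : Fin N → ℝ) (hx : ∀ i, 0 < x i)
    (π : ℝ) (hπ : π = (N_e : ℝ) / N)
    (μx μx2 σx2 : ℝ)
    (hμx : μx = (1 / (N : ℝ)) * ∑ i, x i)
    (hμx2 : μx2 = (1 / (N : ℝ)) * ∑ i, (x i) ^ 2)
    (hσx2 : σx2 = (1 / (N : ℝ)) * ∑ i, (x i - μx) ^ 2) :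
    (∑ s ∈ Finset.powersetCard N_e (Finset.univ : Finset (Fin N)),
        (π * ((1 / (N_e : ℝ)) * ∑ i ∈ s, (x i) ^ 2)
          - (π * ((1 / (N_e : ℝ)) * ∑ i ∈ s, x i)) ^ 2))
      / ((Finset.powersetCard N_e (Finset.univ : Finset (Fin N))).card : ℝ)
    = π * μx2 - (π * μx) ^ 2 - π * (1 - π) * σx2 / ((N : ℝ) - 1) := by
  classical
  set n := N_e
  set P := Finset.powersetCard n (Finset.univ : Finset (Fin N)) with hP
  -- counting constants
  set c1 : ℕ := (N - 1).choose (n - 1) with hc1def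
  set c2 : ℕ := if 2 ≤ n then (N - 2).choose (n - 2) else 0 with hc2def
  -- count of subsets containing a fixed element
  have hcount1 : ∀ i : Fin N, (P.filter (fun s => i ∈ s)).card = c1 := by
    intro i
    have := count_superset (α := Fin N) n {i} (by simpa using hNe)
    simpa [Finset.singleton_subset_iff, Fintype.card_fin] using this
  -- count of subsets containing two fixed elements
  have hcount2 : ∀ i j : Fin N, i ≠ j →
      (P.filter (fun s => i ∈ s ∧ j ∈ s)).card = c2 := by
    intro i j hij
    by_cases h2 : 2 ≤ n
    · have hc : ({i, j} : Finset (Fin N)).card = 2 := by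
        rw [Finset.card_insert_of_notMem (by simpa using hij), Finset.card_singleton]
      have := count_superset (α := Fin N) n {i, j} (by rw [hc]; exact h2)
      rw [hc, Fintype.card_fin] at this
      rw [hc2def, if_pos h2, ← this]
      congr 1
      apply Finset.filter_congr
      intro s _
      simp [Finset.insert_subset_iff]
    · have hn1 : n = 1 := by omega
      rw [hc2def, if_neg h2]
      rw [Finset.card_eq_zero, Finset.filter_eq_empty_iff]
      intro s hs
      rw [hP, Finset.mem_powersetCard] at hs
      rintro ⟨hi, hj⟩
      obtain ⟨a, ha⟩ := Finset.card_eq_one.mp (hs.2.trans hn1)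
      rw [ha, Finset.mem_singleton] at hi hj
      exact hij (hi.trans hj.symm)
  -- basic nonzero facts
  have hNpos : (0:ℝ) < N := by positivity
  have hN0 : (N:ℝ) ≠ 0 := ne_of_gt hNpos
  have hn0 : (n:ℝ) ≠ 0 := by
    have : 0 < n := hNe
    positivity
  have hN1 : (N:ℝ) - 1 ≠ 0 := by
    have : (2:ℝ) ≤ N := by exact_mod_cast hN
    linarith
  have hc0pos : 0 < N.choose n := Nat.choose_pos hle
  have hc0 : ((N.choose n : ℕ) : ℝ) ≠ 0 := by positivity
  -- choose identities
  have hrel1 : (N:ℝ) * c1 = (n:ℝ) * (N.choose n) := by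
    have h := Nat.add_one_mul_choose_eq (N - 1) (n - 1)
    have e1 : (N - 1) + 1 = N := by omega
    have e2 : (n - 1) + 1 = n := by omega
    rw [e1, e2] at h
    exact_mod_cast h.trans (Nat.mul_comm _ _)
  have hrel2 : ((N:ℝ) - 1) * c2 = ((n:ℝ) - 1) * c1 := by
    by_cases h2 : 2 ≤ n
    · have h := Nat.add_one_mul_choose_eq (N - 2) (n - 2)
      have e1 : (N - 2) + 1 = N - 1 := by omega
      have e2 : (n - 2) + 1 = n - 1 := by omega
      rw [e1, e2] at h
      rw [hc2def, if_pos h2]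
      have hcast : ((N - 1 : ℕ) : ℝ) * ((N - 2).choose (n - 2) : ℝ)
          = ((N - 1).choose (n - 1) : ℝ) * ((n - 1 : ℕ) : ℝ) := by exact_mod_cast h
      have eN : ((N - 1 : ℕ) : ℝ) = (N:ℝ) - 1 := by
        have : (1:ℕ) ≤ N := by omega
        push_cast [Nat.cast_sub this]; ring
      have en : ((n - 1 : ℕ) : ℝ) = (n:ℝ) - 1 := by
        push_cast [Nat.cast_sub hNe]; ring
      rw [eN, en] at hcast
      rw [hcast]; ring
    · have hn1 : n = 1 := by omega
      rw [hc2def, if_neg h2, hn1]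
      norm_num
  -- sums over samples: linear part
  have hsum1 : ∀ f : Fin N → ℝ,
      ∑ s ∈ P, ∑ i ∈ s, f i = (c1:ℝ) * ∑ i, f i := by
    intro f
    have : ∀ s ∈ P, ∑ i ∈ s, f i = ∑ i, if i ∈ s then f i else 0 := by
      intro s hs
      rw [Finset.sum_ite_mem, Finset.univ_inter]
    rw [Finset.sum_congr rfl this, Finset.sum_comm]
    rw [Finset.mul_sum]
    refine Finset.sum_congr rfl fun i _ => ?_
    rw [← Finset.sum_filter, Finset.sum_const, hcount1 i, nsmul_eq_mul]
  -- expand the square of a sample sum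
  have inner : ∀ s : Finset (Fin N), (∑ i ∈ s, x i)^2
      = ∑ i, ∑ j, if i ∈ s ∧ j ∈ s then x i * x j else 0 := by
    intro s
    have h1 : ∀ i : Fin N, (∑ j, if i ∈ s ∧ j ∈ s then x i * x j else 0)
        = if i ∈ s then ∑ j ∈ s, x i * x j else 0 := by
      intro i
      by_cases hi : i ∈ s
      · simp only [hi, true_and, if_true]
        rw [Finset.sum_ite_mem, Finset.univ_inter]
      · simp [hi]
    have h2 : (∑ i, ∑ j, if i ∈ s ∧ j ∈ s then x i * x j else 0)
        = ∑ i ∈ s, ∑ j ∈ s, x i * x j := by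
      rw [Finset.sum_congr rfl fun i _ => h1 i, Finset.sum_ite_mem, Finset.univ_inter]
    rw [sq, Finset.sum_mul_sum, ← h2]
  -- counting with two indices
  have key : ∀ i j : Fin N, (∑ s ∈ P, if i ∈ s ∧ j ∈ s then x i * x j else 0)
      = (if i = j then (c1:ℝ) else (c2:ℝ)) * (x i * x j) := by
    intro i j
    rw [← Finset.sum_filter, Finset.sum_const, nsmul_eq_mul]
    congr 1
    by_cases hij : i = j
    · subst hij
      rw [if_pos rfl, ← hcount1 i]
      norm_cast
      congr 1
      apply Finset.filter_congr
      intro s _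
      simp
    · rw [if_neg hij, hcount2 i j hij]
  -- sums over samples: quadratic part
  have hsum2 : ∑ s ∈ P, (∑ i ∈ s, x i) ^ 2
      = (c1:ℝ) * ∑ i, (x i)^2 + (c2:ℝ) * ((∑ i, x i)^2 - ∑ i, (x i)^2) := by
    rw [Finset.sum_congr rfl fun s _ => inner s, Finset.sum_comm]
    have swap2 : ∀ i : Fin N, (∑ s ∈ P, ∑ j, if i ∈ s ∧ j ∈ s then x i * x j else 0)
        = ∑ j, (if i = j then (c1:ℝ) else (c2:ℝ)) * (x i * x j) := by
      intro i
      rw [Finset.sum_comm]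
      exact Finset.sum_congr rfl fun j _ => key i j
    rw [Finset.sum_congr rfl fun i _ => swap2 i]
    have split : ∀ i : Fin N, (∑ j, (if i = j then (c1:ℝ) else (c2:ℝ)) * (x i * x j))
        = ((c1:ℝ) - c2) * (x i)^2 + (c2:ℝ) * (x i * ∑ j, x j) := by
      intro i
      have h3 : ∀ j : Fin N, (if i = j then (c1:ℝ) else (c2:ℝ)) * (x i * x j)
          = (if i = j then ((c1:ℝ) - c2) * (x i * x j) else 0) + (c2:ℝ) * (x i * x j) := by
        intro j
        by_cases h : i = j <;> simp [h] <;> ring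
      rw [Finset.sum_congr rfl fun j _ => h3 j, Finset.sum_add_distrib,
        Finset.sum_ite_eq, if_pos (Finset.mem_univ i), ← Finset.mul_sum, ← Finset.mul_sum]
      ring
    rw [Finset.sum_congr rfl fun i _ => split i, Finset.sum_add_distrib,
      ← Finset.mul_sum, ← Finset.mul_sum,
      show (∑ i : Fin N, x i * ∑ j : Fin N, x j) = (∑ i : Fin N, x i) * (∑ j : Fin N, x j)
        from (Finset.sum_mul _ _ _).symm]
    ring
  -- rewrite the big sum
  have hcard : ((P.card : ℕ) : ℝ) = ((N.choose n : ℕ) : ℝ) := by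
    rw [hP, Finset.card_powersetCard, Finset.card_univ, Fintype.card_fin]
  have hLHS : ∑ s ∈ P, (π * ((1 / (n : ℝ)) * ∑ i ∈ s, (x i) ^ 2)
        - (π * ((1 / (n : ℝ)) * ∑ i ∈ s, x i)) ^ 2)
      = π * (1/(n:ℝ)) * ((c1:ℝ) * ∑ i, (x i)^2)
        - π^2 * (1/(n:ℝ))^2 * ((c1:ℝ) * ∑ i, (x i)^2
            + (c2:ℝ) * ((∑ i, x i)^2 - ∑ i, (x i)^2)) := by
    rw [Finset.sum_sub_distrib]
    congr 1
    · rw [← hsum1 (fun i => (x i)^2), Finset.mul_sum]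
      exact Finset.sum_congr rfl fun s _ => by ring
    · rw [← hsum2, Finset.mul_sum]
      exact Finset.sum_congr rfl fun s _ => by ring
  -- expand sigma
  have hexp : ∑ i, (x i - μx)^2
      = (∑ i, (x i)^2) - 2*μx*(∑ i, x i) + (N:ℝ) * μx^2 := by
    have h4 : ∀ i : Fin N, (x i - μx)^2 = (x i)^2 - 2*μx*(x i) + μx^2 := fun i => by ring
    rw [Finset.sum_congr rfl fun i _ => h4 i, Finset.sum_add_distrib,
      Finset.sum_sub_distrib, ← Finset.mul_sum, Finset.sum_const, Finset.card_univ,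
      Fintype.card_fin, nsmul_eq_mul]
  -- final algebra
  rw [hLHS, hcard, hμx2, hσx2, hexp, hμx, hπ]
  set A := ∑ i, (x i)^2
  set S := ∑ i, x i
  set c0 : ℝ := ((N.choose n : ℕ) : ℝ)
  have hc1' : (c1:ℝ) = (n:ℝ) * c0 / N := by
    field_simp
    linarith [hrel1]
  have hc2' : (c2:ℝ) = ((n:ℝ) - 1) * ((n:ℝ) * c0 / N) / ((N:ℝ) - 1) := by
    rw [eq_div_iff hN1]
    have : ((n:ℝ) - 1) * (c1:ℝ) = ((n:ℝ) - 1) * ((n:ℝ) * c0 / N) := by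
      rw [hc1']
    linarith [hrel2, this]
  rw [hc1', hc2']
  field_simp
  ring
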